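/- Let (N, v) be a simple game with n players and collection of winning coalitions 𝒲. Then there exists p ∈ Q(𝒲) such that for every q ∈ Q(𝒲) one has ⟨p, 𝟙 − q⟩ ≤ n/4, where 𝟙 ∈ ℝ^N is the all-ones vector and ⟨·,·⟩ is the standard inner product on ℝ^N. In other words, min_{p ∈ Q(𝒲)} max_{q ∈ Q(𝒲)} ⟨p, 𝟙 − q⟩ ≤ n/4. -/

import Mathlib

open RealInnerProductSpace


/-- **Reformulation of the conjecture of Freixas and Kurz.**
For a simple game `(N, v)` with `n` players and collection of winning coalitions `𝒲`,
there exists `p ∈ Q(𝒲)` such that for every `q ∈ Q(𝒲)` one has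
`⟨p, 𝟙 - q⟩ ≤ n / 4`; that is,
`min_{p ∈ Q(𝒲)} max_{q ∈ Q(𝒲)} ⟨p, 𝟙 - q⟩ ≤ n / 4`. -/
theorem min_max_inner_one_sub_le_card_div_four
    {N : Type*} [Fintype N] (v : Finset N → ℕ)
    (hv01 : ∀ C, v C = 0 ∨ v C = 1)
    (hmono : ∀ C S : Finset N, C ⊆ S → v C ≤ v S)
    (hempty : v (∅ : Finset N) = 0)
    (hfull : v (Finset.univ : Finset N) = 1) :
    ∃ p : N → ℝ,
      ((∀ i, 0 ≤ p i) ∧ (∀ C : Finset N, v C = 1 → 1 ≤ ∑ i ∈ C, p i)) ∧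
      ∀ q : N → ℝ,
        ((∀ i, 0 ≤ q i) ∧ (∀ C : Finset N, v C = 1 → 1 ≤ ∑ i ∈ C, q i)) →
        ∑ i, p i * (1 - q i) ≤ (Fintype.card N : ℝ) / 4 := by
  classical
  -- The feasible region, as a subset of Euclidean space
  set K : Set (EuclideanSpace ℝ N) :=
    {x | (∀ i, 0 ≤ x i) ∧ ∀ C : Finset N, v C = 1 → 1 ≤ ∑ i ∈ C, x i} with hKdef
  have hne : K.Nonempty := by
    refine ⟨(WithLp.toLp 2 (fun _ => 1) : EuclideanSpace ℝ N), fun i => zero_le_one, fun C hC => ?_⟩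
    have hCne : C.Nonempty := by
      rcases C.eq_empty_or_nonempty with h | h
      · exfalso; rw [h, hempty] at hC; exact zero_ne_one hC
      · exact h
    have : (1 : ℝ) ≤ (C.card : ℝ) := by
      exact_mod_cast Finset.one_le_card.mpr hCne
    simpa using this
  have hconv : Convex ℝ K := by
    intro x hx y hy a b ha hb hab
    refine ⟨fun i => ?_, fun C hC => ?_⟩
    · have : (a • x + b • y) i = a * x i + b * y i := rfl
      rw [this]
      exact add_nonneg (mul_nonneg ha (hx.1 i)) (mul_nonneg hb (hy.1 i))
    · have h1 : ∑ i ∈ C, (a • x + b • y) i = a * ∑ i ∈ C, x i + b * ∑ i ∈ C, y i := by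
        rw [Finset.mul_sum, Finset.mul_sum, ← Finset.sum_add_distrib]
        rfl
      rw [h1]
      calc (1 : ℝ) = a * 1 + b * 1 := by rw [mul_one, mul_one, hab]
        _ ≤ a * ∑ i ∈ C, x i + b * ∑ i ∈ C, y i := by
            gcongr
            · exact hx.2 C hC
            · exact hy.2 C hC
  have hclosed : IsClosed K := by
    have h1 : IsClosed {x : EuclideanSpace ℝ N | ∀ i, 0 ≤ x i} := by
      have : {x : EuclideanSpace ℝ N | ∀ i, 0 ≤ x i} =
          ⋂ i, {x : EuclideanSpace ℝ N | 0 ≤ x i} := by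
        ext x; simp [Set.mem_iInter]
      rw [this]
      exact isClosed_iInter fun i =>
        isClosed_le continuous_const ((continuous_apply i).comp (PiLp.continuous_ofLp 2 _))
    have h2 : IsClosed {x : EuclideanSpace ℝ N |
        ∀ C : Finset N, v C = 1 → 1 ≤ ∑ i ∈ C, x i} := by
      have : {x : EuclideanSpace ℝ N | ∀ C : Finset N, v C = 1 → 1 ≤ ∑ i ∈ C, x i} =
          ⋂ C ∈ {C : Finset N | v C = 1}, {x : EuclideanSpace ℝ N | 1 ≤ ∑ i ∈ C, x i} := by
        ext x; simp [Set.mem_iInter]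
      rw [this]
      exact isClosed_biInter fun C hC =>
        isClosed_le continuous_const (by
          exact continuous_finset_sum _ fun i _ => (continuous_apply i).comp (PiLp.continuous_ofLp 2 _))
    have : K = {x : EuclideanSpace ℝ N | ∀ i, 0 ≤ x i} ∩
        {x : EuclideanSpace ℝ N | ∀ C : Finset N, v C = 1 → 1 ≤ ∑ i ∈ C, x i} := by
      ext x; simp [hKdef, Set.mem_setOf_eq]
    rw [this]
    exact h1.inter h2
  -- minimum norm point
  obtain ⟨p, hpK, hpmin⟩ :=
    exists_norm_eq_iInf_of_complete_convex hne (hclosed.isComplete) hconv (0 : EuclideanSpace ℝ N)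
  have hvar : ∀ w ∈ K, (inner ℝ ((0 : EuclideanSpace ℝ N) - p) (w - p) : ℝ) ≤ 0 :=
    (norm_eq_iInf_iff_real_inner_le_zero hconv hpK).mp hpmin
  refine ⟨p, hpK, ?_⟩
  intro q hq
  set qE : EuclideanSpace ℝ N := WithLp.toLp 2 q with hqE
  have hqK : qE ∈ K := hq
  have hkey : (0:ℝ) ≤ (inner ℝ p (qE - p) : ℝ) := by
    have h := hvar qE hqK
    rw [zero_sub, inner_neg_left] at h
    linarith
  have hinner : (inner ℝ p (qE - p) : ℝ) = ∑ i, p i * (q i - p i) := by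
    rw [PiLp.inner_apply]
    apply Finset.sum_congr rfl
    intro i _
    simp only [RCLike.inner_apply, PiLp.sub_apply, starRingEnd_apply, star_trivial]
    exact mul_comm _ _
  have hstep : ∑ i, p i * (1 - q i) ≤ ∑ i, p i * (1 - p i) := by
    have hdiff : ∑ i, p i * (1 - p i) - ∑ i, p i * (1 - q i) = ∑ i, p i * (q i - p i) := by
      rw [← Finset.sum_sub_distrib]
      apply Finset.sum_congr rfl
      intro i _
      ring
    have h2 : 0 ≤ ∑ i, p i * (q i - p i) := by rw [← hinner]; exact hkey
    linarith
  have hbound : ∑ i, p i * (1 - p i) ≤ (Fintype.card N : ℝ) / 4 := by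
    calc ∑ i, p i * (1 - p i) ≤ ∑ _i : N, (1 : ℝ) / 4 := by
          apply Finset.sum_le_sum
          intro i _
          nlinarith [sq_nonneg (p i - 1 / 2)]
      _ = (Fintype.card N : ℝ) / 4 := by
          rw [Finset.sum_const, Finset.card_univ]
          ring
  linarith
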